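/- If T is a linear isometry of (V, d_{w,(P,π)}), then for every i ∈ [s] there is a unique j ∈ [s] such that T(V_i) ⊆ V_{⟨j⟩} and |⟨i⟩| = |⟨j⟩|; moreover, for every nonzero v_i ∈ V_i there exist a nonzero u_j ∈ V_j and γ_j ∈ V_{⟨j⟩*} with T(v_i) = u_j + γ_j and W_i(v_i) = W_j(u_j). -/

import Mathlib

attribute [local instance] Classical.propDecidable
set_option linter.unusedSectionVars false
set_option linter.unusedVariables false
set_option maxHeartbeats 1000000

noncomputable section

variable {ι F : Type*}

section Defs
variable [Fintype ι] [PartialOrder ι] [Field F] [Fintype F] {k : ι → ℕ}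

/-- block support -/
def suppB (u : ∀ i, Fin (k i) → F) : Finset ι :=
  Finset.univ.filter fun i => u i ≠ 0

/-- order ideal generated by the block support -/
def idealOf (u : ∀ i, Fin (k i) → F) : Finset ι :=
  Finset.univ.filter fun i => ∃ j ∈ suppB u, i ≤ j

/-- maximal elements of the ideal generated by the support -/
def maxOf (u : ∀ i, Fin (k i) → F) : Finset ι :=
  (idealOf u).filter fun i => ∀ j ∈ idealOf u, i ≤ j → i = j

/-- maximal weight of a block -/
def Wblk (w : F → ℕ) (u : ∀ i, Fin (k i) → F) (i : ι) : ℕ :=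
  Finset.univ.sup fun j => w (u i j)

/-- maximal value of the weight -/
def Mw (w : F → ℕ) : ℕ := Finset.univ.sup w

/-- minimal value of the weight on nonzero elements -/
def mw (w : F → ℕ) : ℕ := sInf (w '' {a | a ≠ 0})

/-- the weighted poset block weight -/
def omegaW (w : F → ℕ) (u : ∀ i, Fin (k i) → F) : ℕ :=
  (∑ i ∈ maxOf u, Wblk w u i) + (idealOf u \ maxOf u).card * Mw w

/-- principal ideal generated by `i` -/
def pIdeal (i : ι) : Finset ι := Finset.univ.filter fun j => j ≤ i

end Defs

section Basic
variable [Fintype ι] [PartialOrder ι] [Field F] [Fintype F] {k : ι → ℕ}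

lemma mem_suppB {u : ∀ i, Fin (k i) → F} {i : ι} : i ∈ suppB u ↔ u i ≠ 0 := by
  simp [suppB]

lemma suppB_zero : suppB (0 : ∀ i, Fin (k i) → F) = ∅ := by
  ext i; simp [mem_suppB]

lemma suppB_eq_empty {u : ∀ i, Fin (k i) → F} (h : suppB u = ∅) : u = 0 := by
  funext i
  by_contra hi
  have : i ∈ suppB u := mem_suppB.2 hi
  rw [h] at this
  simp at this

lemma mem_pIdeal {i j : ι} : j ∈ pIdeal i ↔ j ≤ i := by simp [pIdeal]

lemma mem_idealOf {u : ∀ i, Fin (k i) → F} {i : ι} :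
    i ∈ idealOf u ↔ ∃ j ∈ suppB u, i ≤ j := by simp [idealOf]

lemma suppB_subset_idealOf {u : ∀ i, Fin (k i) → F} : suppB u ⊆ idealOf u := by
  intro i hi; exact mem_idealOf.2 ⟨i, hi, le_rfl⟩

lemma maxOf_subset {u : ∀ i, Fin (k i) → F} : maxOf u ⊆ idealOf u :=
  Finset.filter_subset _ _

lemma mem_maxOf {u : ∀ i, Fin (k i) → F} {i : ι} :
    i ∈ maxOf u ↔ i ∈ idealOf u ∧ ∀ j ∈ idealOf u, i ≤ j → i = j := by
  simp [maxOf]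

lemma maxOf_mem_suppB {u : ∀ i, Fin (k i) → F} {e : ι} (he : e ∈ maxOf u) :
    e ∈ suppB u := by
  obtain ⟨h1, h2⟩ := mem_maxOf.1 he
  obtain ⟨j, hj, hle⟩ := mem_idealOf.1 h1
  have := h2 j (suppB_subset_idealOf hj) hle
  subst this; exact hj

lemma exists_max_above {u : ∀ i, Fin (k i) → F} {x : ι} (hx : x ∈ idealOf u) :
    ∃ e ∈ maxOf u, x ≤ e := by
  classical
  obtain ⟨e, he, hmax⟩ : ∃ e ∈ (idealOf u).filter fun y => x ≤ y,
      ∀ y ∈ (idealOf u).filter fun y => x ≤ y, ¬ e < y := by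
    obtain ⟨e, he⟩ := Finset.exists_maximal (s := (idealOf u).filter fun y => x ≤ y)
      ⟨x, by simp [hx]⟩
    exact ⟨e, he.prop, fun y hy hlt => lt_irrefl _ (lt_of_lt_of_le hlt (he.le_of_ge hy hlt.le))⟩
  simp only [Finset.mem_filter] at he
  refine ⟨e, mem_maxOf.2 ⟨he.1, ?_⟩, he.2⟩
  intro j hj hle
  by_contra hne
  exact hmax j (by simp [hj, le_trans he.2 hle]) (lt_of_le_of_ne hle hne)

end Basic

section Weights
variable [Fintype ι] [PartialOrder ι] [Field F] [Fintype F] {k : ι → ℕ}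
variable {w : F → ℕ}

lemma w_le_Mw (a : F) : w a ≤ Mw w := Finset.le_sup (Finset.mem_univ a)

lemma exists_Mw : ∃ c : F, w c = Mw w := by
  obtain ⟨c, _, hc⟩ := Finset.exists_mem_eq_sup (Finset.univ : Finset F)
    ⟨0, Finset.mem_univ 0⟩ w
  exact ⟨c, hc.symm⟩

lemma mw_image_nonempty : (w '' {a | a ≠ 0}).Nonempty :=
  ⟨w 1, 1, one_ne_zero, rfl⟩

lemma exists_mw : ∃ b : F, b ≠ 0 ∧ w b = mw w := by
  have := Nat.sInf_mem (mw_image_nonempty (w := w) (F := F))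
  obtain ⟨b, hb, hwb⟩ := this
  exact ⟨b, hb, hwb⟩

lemma mw_le {a : F} (ha : a ≠ 0) : mw w ≤ w a := Nat.sInf_le ⟨a, ha, rfl⟩

lemma mw_pos (hw0 : ∀ a : F, w a = 0 ↔ a = 0) : 0 < mw w := by
  obtain ⟨b, hb, hwb⟩ := exists_mw (w := w)
  rw [← hwb]
  exact Nat.pos_of_ne_zero fun h => hb ((hw0 b).1 h)

lemma mw_le_Mw : mw w ≤ Mw w := le_trans (mw_le one_ne_zero) (w_le_Mw 1)

lemma Mw_pos (hw0 : ∀ a : F, w a = 0 ↔ a = 0) : 0 < Mw w :=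
  lt_of_lt_of_le (mw_pos hw0) mw_le_Mw

lemma Wblk_le_Mw {u : ∀ i, Fin (k i) → F} {i : ι} : Wblk w u i ≤ Mw w :=
  Finset.sup_le fun j _ => w_le_Mw _

lemma Wblk_congr {u v : ∀ i, Fin (k i) → F} {i : ι} (h : u i = v i) :
    Wblk w u i = Wblk w v i := by
  unfold Wblk; rw [h]

lemma exists_entry_ne_zero {n : ℕ} {f : Fin n → F} (h : f ≠ 0) :
    ∃ p, f p ≠ 0 := by
  by_contra hc
  push_neg at hc
  exact h (funext fun p => hc p)

lemma mw_le_Wblk {u : ∀ i, Fin (k i) → F} {i : ι} (h : u i ≠ 0) :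
    mw w ≤ Wblk w u i := by
  obtain ⟨p, hp⟩ := exists_entry_ne_zero h
  have h2 : w (u i p) ≤ Wblk w u i :=
    Finset.le_sup (f := fun q => w (u i q)) (Finset.mem_univ p)
  exact le_trans (mw_le hp) h2

lemma idealOf_zero : idealOf (0 : ∀ i, Fin (k i) → F) = ∅ := by
  ext x
  rw [mem_idealOf, suppB_zero (k := k)]
  simp

lemma omega_zero : omegaW w (0 : ∀ i, Fin (k i) → F) = 0 := by
  have h0 : idealOf (0 : ∀ i, Fin (k i) → F) = ∅ := idealOf_zero
  have h1 : maxOf (0 : ∀ i, Fin (k i) → F) = ∅ := by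
    have h2 := maxOf_subset (u := (0 : ∀ i, Fin (k i) → F))
    rw [h0] at h2
    exact Finset.subset_empty.1 h2
  simp [omegaW, h0, h1]

lemma omega_pos (hw0 : ∀ a : F, w a = 0 ↔ a = 0) {u : ∀ i, Fin (k i) → F}
    (h : u ≠ 0) : 0 < omegaW w u := by
  have hs : suppB u ≠ ∅ := fun hh => h (suppB_eq_empty hh)
  obtain ⟨x, hx⟩ := Finset.nonempty_iff_ne_empty.2 hs
  obtain ⟨e, he, _⟩ := exists_max_above (suppB_subset_idealOf hx)
  have h1 : mw w ≤ Wblk w u e := mw_le_Wblk (mem_suppB.1 (maxOf_mem_suppB he))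
  have h2 : Wblk w u e ≤ ∑ i ∈ maxOf u, Wblk w u i :=
    Finset.single_le_sum (fun i _ => Nat.zero_le _) he
  have : 0 < ∑ i ∈ maxOf u, Wblk w u i := lt_of_lt_of_le (mw_pos hw0) (le_trans h1 h2)
  unfold omegaW
  omega

lemma omega_eval {u : ∀ i, Fin (k i) → F} {top : ι}
    (h1 : suppB u ⊆ pIdeal top) (h2 : u top ≠ 0) :
    idealOf u = pIdeal top ∧ maxOf u = {top} ∧
      omegaW w u = Wblk w u top + ((pIdeal top).erase top).card * Mw w := by
  have hia : idealOf u = pIdeal top := by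
    ext x
    rw [mem_idealOf, mem_pIdeal]
    constructor
    · rintro ⟨j, hj, hle⟩
      exact le_trans hle (mem_pIdeal.1 (h1 hj))
    · intro hx
      exact ⟨top, mem_suppB.2 h2, hx⟩
  have htop : top ∈ idealOf u := by rw [hia]; exact mem_pIdeal.2 le_rfl
  have hma : maxOf u = {top} := by
    ext e
    rw [Finset.mem_singleton, mem_maxOf]
    constructor
    · rintro ⟨h3, h4⟩
      exact h4 top htop (mem_pIdeal.1 (hia ▸ h3))
    · rintro rfl
      refine ⟨htop, fun j hj hle => le_antisymm hle (mem_pIdeal.1 (hia ▸ hj))⟩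
  refine ⟨hia, hma, ?_⟩
  unfold omegaW
  rw [hia, hma, Finset.sum_singleton, Finset.sdiff_singleton_eq_erase]

lemma card_mul_mw_le_sum {u : ∀ i, Fin (k i) → F} :
    (maxOf u).card * mw w ≤ ∑ i ∈ maxOf u, Wblk w u i := by
  have := Finset.card_nsmul_le_sum (maxOf u) (fun i => Wblk w u i) (mw w)
    (fun x hx => mw_le_Wblk (mem_suppB.1 (maxOf_mem_suppB hx)))
  simpa using this

end Weights

section Restrict
variable [Fintype ι] [PartialOrder ι] [Field F] [Fintype F] {k : ι → ℕ}
variable {w : F → ℕ}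

def restrictTo (Q : Finset ι) (u : ∀ i, Fin (k i) → F) : ∀ i, Fin (k i) → F :=
  fun l => if l ∈ Q then u l else 0

def outA (Q : Finset ι) (u : ∀ i, Fin (k i) → F) : ∀ i, Fin (k i) → F :=
  fun l => if l ∈ Q then 0 else u l

lemma restrictTo_mem {Q : Finset ι} {u : ∀ i, Fin (k i) → F} {l : ι} (h : l ∈ Q) :
    restrictTo Q u l = u l := by simp [restrictTo, h]

lemma restrictTo_not_mem {Q : Finset ι} {u : ∀ i, Fin (k i) → F} {l : ι} (h : l ∉ Q) :
    restrictTo Q u l = 0 := by simp [restrictTo, h]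

lemma outA_mem {Q : Finset ι} {u : ∀ i, Fin (k i) → F} {l : ι} (h : l ∈ Q) :
    outA Q u l = 0 := by simp [outA, h]

lemma outA_not_mem {Q : Finset ι} {u : ∀ i, Fin (k i) → F} {l : ι} (h : l ∉ Q) :
    outA Q u l = u l := by simp [outA, h]

lemma suppB_restrictTo {Q : Finset ι} {u : ∀ i, Fin (k i) → F} :
    suppB (restrictTo Q u) ⊆ Q := by
  intro l hl
  by_contra hc
  exact (mem_suppB.1 hl) (restrictTo_not_mem hc)

lemma suppB_outA_subset {Q : Finset ι} {u : ∀ i, Fin (k i) → F} :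
    suppB (outA Q u) ⊆ suppB u := by
  intro l hl
  rw [mem_suppB] at hl ⊢
  by_cases h : l ∈ Q
  · rw [outA_mem h] at hl; exact absurd rfl hl
  · rwa [outA_not_mem h] at hl

lemma suppB_outA_disj {Q : Finset ι} {u : ∀ i, Fin (k i) → F} {l : ι}
    (h : l ∈ suppB (outA Q u)) : l ∉ Q := by
  intro hc
  exact (mem_suppB.1 h) (outA_mem hc)

lemma restrict_add_outA (Q : Finset ι) (u : ∀ i, Fin (k i) → F) :
    restrictTo Q u + outA Q u = u := by
  funext l
  by_cases h : l ∈ Q <;> simp [restrictTo, outA, h]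

lemma outA_add (Q : Finset ι) (u v : ∀ i, Fin (k i) → F) :
    outA Q (u + v) = outA Q u + outA Q v := by
  funext l
  by_cases h : l ∈ Q <;> simp [outA, h]

lemma outA_smul (Q : Finset ι) (α : F) (u : ∀ i, Fin (k i) → F) :
    outA Q (α • u) = α • outA Q u := by
  funext l
  by_cases h : l ∈ Q <;> simp [outA, h]

lemma suppB_add_subset {u v : ∀ i, Fin (k i) → F} :
    suppB (u + v) ⊆ suppB u ∪ suppB v := by
  intro l hl
  rw [mem_suppB] at hl
  rw [Finset.mem_union, mem_suppB, mem_suppB]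
  by_contra hc
  push_neg at hc
  apply hl
  have : (u + v) l = u l + v l := rfl
  rw [this, hc.1, hc.2, add_zero]

lemma suppB_sub_subset {u v : ∀ i, Fin (k i) → F} :
    suppB (u - v) ⊆ suppB u ∪ suppB v := by
  intro l hl
  rw [mem_suppB] at hl
  rw [Finset.mem_union, mem_suppB, mem_suppB]
  by_contra hc
  push_neg at hc
  apply hl
  have : (u - v) l = u l - v l := rfl
  rw [this, hc.1, hc.2, sub_zero]

lemma suppB_smul {α : F} (hα : α ≠ 0) (u : ∀ i, Fin (k i) → F) :
    suppB (α • u) = suppB u := by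
  ext l
  rw [mem_suppB, mem_suppB]
  constructor
  · intro h hc
    apply h
    have : (α • u) l = α • (u l) := rfl
    rw [this, hc, smul_zero]
  · intro h hc
    apply h
    have h2 : (α • u) l = α • (u l) := rfl
    rw [h2] at hc
    exact (smul_eq_zero.1 hc).resolve_left hα

lemma eq_sum_blocks {u : ∀ i, Fin (k i) → F} {Q : Finset ι} (h : suppB u ⊆ Q) :
    u = ∑ s ∈ Q, restrictTo {s} u := by
  funext l
  rw [Finset.sum_apply]
  have hterm : ∀ s ∈ Q, restrictTo {s} u l = if l = s then u l else 0 := by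
    intro s _
    by_cases he : l = s <;> simp [restrictTo, he]
  rw [Finset.sum_congr rfl hterm, Finset.sum_ite_eq]
  by_cases hl : l ∈ Q
  · simp [hl]
  · simp [hl]
    by_contra hc
    exact hl (h (mem_suppB.2 fun hh => hc hh))

lemma suppB_map_sum (T : (∀ i, Fin (k i) → F) →ₗ[F] (∀ i, Fin (k i) → F))
    {Q P : Finset ι} {v : ∀ i, Fin (k i) → F} (hv : suppB v ⊆ Q)
    (h : ∀ s ∈ Q, suppB (T (restrictTo {s} v)) ⊆ P) :
    suppB (T v) ⊆ P := by
  intro l hl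
  rw [mem_suppB] at hl
  rw [eq_sum_blocks hv, map_sum] at hl
  have hl2 : (∑ s ∈ Q, T (restrictTo {s} v)) l = ∑ s ∈ Q, (T (restrictTo {s} v)) l :=
    Finset.sum_apply l Q _
  rw [hl2] at hl
  obtain ⟨s, hs, hne⟩ := Finset.exists_ne_zero_of_sum_ne_zero hl
  exact h s hs (mem_suppB.2 hne)

def indV (t : ι) : ∀ i, Fin (k i) → F := fun l => if l = t then (fun _ => 1) else 0

lemma indV_self (t : ι) : (indV (k := k) (F := F) t) t = fun _ => (1:F) := by simp [indV]

lemma indV_ne_zero {t : ι} (hkt : 0 < k t) : (indV (k := k) (F := F) t) ≠ 0 := by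
  intro h
  have h2 := congrFun (congrFun h t) ⟨0, hkt⟩
  rw [indV_self] at h2
  exact one_ne_zero h2

lemma indV_block_ne_zero {t : ι} (hkt : 0 < k t) : (indV (k := k) (F := F) t) t ≠ 0 := by
  intro h
  rw [indV_self] at h
  exact one_ne_zero (congrFun h ⟨0, hkt⟩)

lemma suppB_indV {t : ι} : suppB (indV (k := k) (F := F) t) ⊆ {t} := by
  intro l hl
  rw [mem_suppB] at hl
  rw [Finset.mem_singleton]
  by_contra hc
  exact hl (by simp [indV, hc])

lemma suppB_nonzero_mem {v : ∀ i, Fin (k i) → F} {t : ι} (hv : suppB v ⊆ {t})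
    (hvne : v ≠ 0) : v t ≠ 0 ∧ t ∈ suppB v := by
  have hne : suppB v ≠ ∅ := fun hh => hvne (suppB_eq_empty hh)
  obtain ⟨x, hx⟩ := Finset.nonempty_iff_ne_empty.2 hne
  have := Finset.mem_singleton.1 (hv hx)
  subst this
  exact ⟨mem_suppB.1 hx, hx⟩

end Restrict

section PerV
variable [Fintype ι] [PartialOrder ι] [Field F] [Fintype F] {k : ι → ℕ}

lemma idealOf_mono {u v : ∀ i, Fin (k i) → F} (h : suppB u ⊆ suppB v) :
    idealOf u ⊆ idealOf v := by
  intro x hx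
  obtain ⟨j, hj, hle⟩ := mem_idealOf.1 hx
  exact mem_idealOf.2 ⟨j, h hj, hle⟩

lemma per_v (w : F → ℕ) (hw0 : ∀ a : F, w a = 0 ↔ a = 0) (hk : ∀ i, 0 < k i)
    (T S : (∀ i, Fin (k i) → F) →ₗ[F] (∀ i, Fin (k i) → F))
    (hTiso : ∀ u, omegaW w (T u) = omegaW w u)
    (hST : ∀ u, S (T u) = u)
    (hTS : ∀ u, T (S u) = u)
    (t : ι) (A : Finset ι)
    (hAdown : ∀ x a, a ∈ A → x ≤ a → x ∈ A)
    (hAcard : A.card = ((pIdeal t).erase t).card)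
    (hSA : ∀ u, suppB u ⊆ A → suppB (S u) ⊆ (pIdeal t).erase t)
    (v : ∀ i, Fin (k i) → F) (hv : suppB v ⊆ {t}) (hvne : v ≠ 0) :
    (suppB (outA A (T v))).Nonempty ∧
    (∑ e ∈ suppB (outA A (T v)), Wblk w (T v) e = Wblk w v t) ∧
    idealOf (outA A (T v)) = A ∪ suppB (outA A (T v)) ∧
    (∀ x ∈ idealOf (outA A (T v)), ∃ e ∈ suppB (outA A (T v)), x ≤ e) := by
  classical
  set E := (pIdeal t).erase t with hE
  set z := T v with hzdef
  set zh := outA A z with hzhdef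
  have hvt : v t ≠ 0 := (suppB_nonzero_mem hv hvne).1
  have htE : t ∉ E := Finset.notMem_erase t _
  have hEsub : E ⊆ pIdeal t := Finset.erase_subset _ _
  have hzh_off : ∀ l, l ∉ A → zh l = z l := fun l h => outA_not_mem h
  have hzh_on : ∀ l ∈ A, zh l = 0 := fun l h => outA_mem h
  obtain ⟨cstar, hcstar⟩ := exists_Mw (w := w)
  have hMwpos : 0 < Mw w := Mw_pos hw0
  have hmwpos : 0 < mw w := mw_pos hw0
  have hcne : cstar ≠ 0 := by
    intro h
    rw [h] at hcstar
    rw [(hw0 0).2 rfl] at hcstar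
    omega
  -- the constancy property
  have hconst : ∀ g : ∀ i, Fin (k i) → F, suppB g ⊆ A →
      omegaW w (zh + g) = Wblk w v t + E.card * Mw w := by
    intro g hg
    set y := g - restrictTo A z with hy
    have hysupp : suppB y ⊆ A := by
      intro l hl
      rcases Finset.mem_union.1 (suppB_sub_subset hl) with h | h
      · exact hg h
      · exact suppB_restrictTo h
    have hSy := hSA y hysupp
    have hSyt : (S y) t = 0 := by
      by_contra h
      exact htE (hSy (mem_suppB.2 h))
    have hadd_t : (v + S y) t = v t := by
      show v t + (S y) t = v t
      rw [hSyt, add_zero]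
    have hsupp2 : suppB (v + S y) ⊆ pIdeal t := by
      intro l hl
      rcases Finset.mem_union.1 (suppB_add_subset hl) with h | h
      · rw [Finset.mem_singleton.1 (hv h)]
        exact mem_pIdeal.2 le_rfl
      · exact hEsub (hSy h)
    have htop : (v + S y) t ≠ 0 := by rw [hadd_t]; exact hvt
    obtain ⟨hi1, hi2, heval⟩ := omega_eval (w := w) hsupp2 htop
    have hWc : Wblk w (v + S y) t = Wblk w v t := Wblk_congr hadd_t
    have hTeq : T (v + S y) = zh + g := by
      rw [map_add, hTS]
      funext l
      show z l + y l = zh l + g l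
      by_cases hl : l ∈ A
      · rw [hy]
        show z l + (g l - restrictTo A z l) = zh l + g l
        rw [restrictTo_mem hl, hzh_on l hl]
        abel
      · rw [hy]
        show z l + (g l - restrictTo A z l) = zh l + g l
        rw [restrictTo_not_mem hl, hzh_off l hl]
        abel
    calc omegaW w (zh + g) = omegaW w (T (v + S y)) := by rw [hTeq]
      _ = omegaW w (v + S y) := hTiso _
      _ = Wblk w v t + E.card * Mw w := by rw [heval, hWc]
  -- zh is nonzero
  have hzhne : zh ≠ 0 := by
    intro h
    have hsz : suppB z ⊆ A := by
      intro l hl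
      by_contra hc
      have h2 := hzh_off l hc
      rw [h] at h2
      exact (mem_suppB.1 hl) (by rw [← h2]; rfl)
    have h3 := hSA z hsz
    rw [hzdef, hST] at h3
    exact htE (h3 (suppB_nonzero_mem hv hvne).2)
  have hsne : (suppB zh).Nonempty :=
    Finset.nonempty_iff_ne_empty.2 fun hh => hzhne (suppB_eq_empty hh)
  have hsdisj : ∀ l ∈ suppB zh, l ∉ A := fun l hl => suppB_outA_disj hl
  -- first equation
  have hEQ1 : omegaW w zh = Wblk w v t + E.card * Mw w := by
    have := hconst 0 (by rw [suppB_zero (k := k)]; exact Finset.empty_subset _)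
    rwa [add_zero] at this
  -- the full perturbation
  set gfull : ∀ i, Fin (k i) → F := fun l => if l ∈ A then (fun _ => cstar) else 0
    with hgf
  have hgf_on : ∀ l ∈ A, gfull l = fun _ => cstar := by
    intro l hl; simp only [hgf]; rw [if_pos hl]
  have hgf_off : ∀ l, l ∉ A → gfull l = 0 := by
    intro l hl; simp only [hgf]; rw [if_neg hl]
  have hconstne : (fun _ : Fin (k t) => cstar) ≠ 0 → True := fun _ => trivial
  have hgfsupp : suppB gfull ⊆ A := by
    intro l hl
    by_contra hc
    exact (mem_suppB.1 hl) (hgf_off l hc)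
  set zg := zh + gfull with hzg
  have hzg_on : ∀ l ∈ A, zg l = fun _ => cstar := by
    intro l hl
    show zh l + gfull l = _
    rw [hzh_on l hl, hgf_on l hl, zero_add]
  have hzg_off : ∀ l, l ∉ A → zg l = zh l := by
    intro l hl
    show zh l + gfull l = zh l
    rw [hgf_off l hl, add_zero]
  have hconst_ne : ∀ l : ι, (fun _ : Fin (k l) => cstar) ≠ 0 := by
    intro l h
    exact hcne (congrFun h ⟨0, hk l⟩)
  have hsupp_zg : suppB zg = suppB zh ∪ A := by
    ext l
    rw [mem_suppB, Finset.mem_union, mem_suppB]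
    by_cases hl : l ∈ A
    · rw [hzg_on l hl]
      simp only [hl, or_true, iff_true]
      exact hconst_ne l
    · rw [hzg_off l hl]
      simp [hl]
  have hideal_zg : idealOf zg = idealOf zh ∪ A := by
    ext x
    rw [Finset.mem_union, mem_idealOf]
    constructor
    · rintro ⟨j, hj, hle⟩
      rw [hsupp_zg, Finset.mem_union] at hj
      rcases hj with hj | hj
      · exact Or.inl (mem_idealOf.2 ⟨j, hj, hle⟩)
      · exact Or.inr (hAdown x j hj hle)
    · rintro (hx | hx)
      · obtain ⟨j, hj, hle⟩ := mem_idealOf.1 hx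
        exact ⟨j, by rw [hsupp_zg]; exact Finset.mem_union_left _ hj, hle⟩
      · exact ⟨x, by rw [hsupp_zg]; exact Finset.mem_union_right _ hx, le_rfl⟩
  -- maximal sets
  set M1 := maxOf zh with hM1
  set M2 := maxOf zg with hM2
  have hM1A : ∀ e ∈ M1, e ∉ A := fun e he => hsdisj e (maxOf_mem_suppB he)
  have hM1M2 : M1 ⊆ M2 := by
    intro e he
    obtain ⟨he1, he2⟩ := mem_maxOf.1 he
    refine mem_maxOf.2 ⟨by rw [hideal_zg]; exact Finset.mem_union_left _ he1, ?_⟩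
    intro j hj hle
    rw [hideal_zg, Finset.mem_union] at hj
    rcases hj with hj | hj
    · exact he2 j hj hle
    · exact absurd (hAdown e j hj hle) (hM1A e he)
  have hM2A : M2 \ A = M1 := by
    ext e
    rw [Finset.mem_sdiff]
    constructor
    · rintro ⟨he, heA⟩
      obtain ⟨he1, he2⟩ := mem_maxOf.1 he
      rw [hideal_zg, Finset.mem_union] at he1
      rcases he1 with he1 | he1
      · refine mem_maxOf.2 ⟨he1, fun j hj hle => he2 j ?_ hle⟩
        rw [hideal_zg]
        exact Finset.mem_union_left _ hj
      · exact absurd he1 heA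
    · intro he
      exact ⟨hM1M2 he, hM1A e he⟩
  -- sums over M2
  have hsplit : M2 = M1 ∪ (M2 ∩ A) := by
    ext e
    rw [Finset.mem_union, Finset.mem_inter]
    constructor
    · intro he
      by_cases heA : e ∈ A
      · exact Or.inr ⟨he, heA⟩
      · exact Or.inl (by rw [← hM2A]; exact Finset.mem_sdiff.2 ⟨he, heA⟩)
    · rintro (he | ⟨he, _⟩)
      · exact hM1M2 he
      · exact he
  have hdisj : Disjoint M1 (M2 ∩ A) := by
    rw [Finset.disjoint_left]
    intro e he heA
    exact hM1A e he (Finset.mem_inter.1 heA).2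
  have hsum2 : ∑ e ∈ M2, Wblk w zg e
      = (∑ e ∈ M1, Wblk w zh e) + (M2 ∩ A).card * Mw w := by
    rw [hsplit, Finset.sum_union hdisj]
    congr 1
    · apply Finset.sum_congr rfl
      intro e he
      exact Wblk_congr (hzg_off e (hM1A e he))
    · have hterm : ∀ a ∈ M2 ∩ A, Wblk w zg a = Mw w := by
        intro a ha
        have haA : a ∈ A := (Finset.mem_inter.1 ha).2
        have h1 : Wblk w zg a = w cstar := by
          unfold Wblk
          rw [hzg_on a haA]
          exact Finset.sup_const ⟨(⟨0, hk a⟩ : Fin (k a)), Finset.mem_univ _⟩ (w cstar)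
        rw [h1, hcstar]
      rw [Finset.sum_congr rfl hterm, Finset.sum_const, smul_eq_mul]
      rw [← hsplit]
  have hEQ2 : omegaW w zg = Wblk w v t + E.card * Mw w := hconst gfull hgfsupp
  have hM1sub : M1 ⊆ idealOf zh := by rw [hM1]; exact maxOf_subset
  have hM2sub : M2 ⊆ idealOf zg := by rw [hM2]; exact maxOf_subset
  have hc1sum : (idealOf zh \ M1).card + M1.card = (idealOf zh).card :=
    Finset.card_sdiff_add_card_eq_card hM1sub
  have hc2sum : (idealOf zg \ M2).card + M2.card = (idealOf zg).card :=
    Finset.card_sdiff_add_card_eq_card hM2sub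
  have hM2card : M2.card = M1.card + (M2 ∩ A).card := by
    have h := Finset.card_union_of_disjoint hdisj
    rw [← hsplit] at h
    exact h
  have homega1 : (∑ e ∈ M1, Wblk w zh e) + (idealOf zh \ M1).card * Mw w
      = Wblk w v t + E.card * Mw w := by
    have h := hEQ1
    unfold omegaW at h
    rw [← hM1] at h
    exact h
  have homega2 : ((∑ e ∈ M1, Wblk w zh e) + (M2 ∩ A).card * Mw w)
      + (idealOf zg \ M2).card * Mw w = Wblk w v t + E.card * Mw w := by
    have h := hEQ2
    unfold omegaW at h
    rw [← hM2] at h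
    rw [hsum2] at h
    exact h
  have h3 : (idealOf zh \ M1).card * Mw w
      = (M2 ∩ A).card * Mw w + (idealOf zg \ M2).card * Mw w := by
    have e2 : (∑ e ∈ M1, Wblk w zh e)
        + ((M2 ∩ A).card * Mw w + (idealOf zg \ M2).card * Mw w)
        = Wblk w v t + E.card * Mw w := by
      rw [← add_assoc]; exact homega2
    exact Nat.add_left_cancel (homega1.trans e2.symm)
  have h4 : (idealOf zh \ M1).card = (M2 ∩ A).card + (idealOf zg \ M2).card :=
    Nat.eq_of_mul_eq_mul_right hMwpos (by rw [add_mul]; exact h3)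
  have hcard_eq : (idealOf zh).card = (idealOf zg).card := by omega
  have hidsub : idealOf zh ⊆ idealOf zg :=
    idealOf_mono (by rw [hsupp_zg]; exact Finset.subset_union_left)
  have hidem : idealOf zh = idealOf zg :=
    Finset.eq_of_subset_of_card_le hidsub (le_of_eq hcard_eq.symm)
  have hAideal : A ⊆ idealOf zh := by
    rw [hidem, hideal_zg]
    exact Finset.subset_union_right
  -- second counting step
  set D := idealOf zh \ A with hD
  have hM1D : M1 ⊆ D := fun e he => Finset.mem_sdiff.2 ⟨hM1sub he, hM1A e he⟩
  have hDcard : D.card + A.card = (idealOf zh).card :=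
    Finset.card_sdiff_add_card_eq_card hAideal
  have hm1pos : 0 < M1.card := by
    obtain ⟨x, hx⟩ := hsne
    obtain ⟨e, he, -⟩ := exists_max_above (suppB_subset_idealOf hx)
    exact Finset.card_pos.2 ⟨e, by rw [hM1]; exact he⟩
  have hSm_ge : M1.card * mw w ≤ ∑ e ∈ M1, Wblk w zh e := by
    rw [hM1]; exact card_mul_mw_le_sum
  have hWv_le : Wblk w v t ≤ Mw w := Wblk_le_Mw
  have hDM : D.card = M1.card := by
    rcases Nat.lt_or_ge M1.card D.card with hlt | hge
    · exfalso
      have hc1ge : E.card + 1 ≤ (idealOf zh \ M1).card := by omega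
      have hbig : mw w + (E.card * Mw w + Mw w)
          ≤ (∑ e ∈ M1, Wblk w zh e) + (idealOf zh \ M1).card * Mw w := by
        apply Nat.add_le_add
        · exact le_trans (Nat.le_mul_of_pos_left _ hm1pos) hSm_ge
        · calc E.card * Mw w + Mw w = (E.card + 1) * Mw w := by ring
            _ ≤ (idealOf zh \ M1).card * Mw w := Nat.mul_le_mul_right _ hc1ge
      rw [homega1] at hbig
      have hbig2 : (mw w + Mw w) + E.card * Mw w
          ≤ Wblk w v t + E.card * Mw w := by
        calc (mw w + Mw w) + E.card * Mw w = mw w + (E.card * Mw w + Mw w) := by ring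
          _ ≤ Wblk w v t + E.card * Mw w := hbig
      have hfin := Nat.le_of_add_le_add_right hbig2
      omega
    · exact le_antisymm hge (Finset.card_le_card hM1D)
  have hM1eqD : M1 = D := Finset.eq_of_subset_of_card_le hM1D (le_of_eq hDM)
  have hSmWv : ∑ e ∈ M1, Wblk w zh e = Wblk w v t := by
    have hc1E : (idealOf zh \ M1).card = E.card := by omega
    have h := homega1
    rw [hc1E] at h
    exact Nat.add_right_cancel h
  have hsupp_eq : suppB zh = D := by
    apply Finset.Subset.antisymm
    · intro l hl
      exact Finset.mem_sdiff.2 ⟨suppB_subset_idealOf hl, hsdisj l hl⟩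
    · rw [← hM1eqD, hM1]
      intro e he
      exact maxOf_mem_suppB he
  refine ⟨hsne, ?_, ?_, ?_⟩
  · rw [hsupp_eq, ← hM1eqD, ← hSmWv]
    apply Finset.sum_congr rfl
    intro e he
    exact Wblk_congr (hzh_off e (hM1A e he)).symm
  · ext x
    rw [Finset.mem_union]
    constructor
    · intro hx
      by_cases hxA : x ∈ A
      · exact Or.inl hxA
      · exact Or.inr (by rw [hsupp_eq]; exact Finset.mem_sdiff.2 ⟨hx, hxA⟩)
    · rintro (hx | hx)
      · exact hAideal hx
      · exact suppB_subset_idealOf hx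
  · intro x hx
    obtain ⟨e, he, hle⟩ := exists_max_above hx
    refine ⟨e, ?_, hle⟩
    rw [hsupp_eq, ← hM1eqD, hM1]
    exact he

end PerV

section Core
variable [Fintype ι] [PartialOrder ι] [Field F] [Fintype F] {k : ι → ℕ}

def GOODF (T S : (∀ i, Fin (k i) → F) →ₗ[F] (∀ i, Fin (k i) → F)) (w : F → ℕ)
    (t j : ι) : Prop :=
  (pIdeal j).card = (pIdeal t).card ∧
  (∀ v : ∀ i, Fin (k i) → F, suppB v ⊆ pIdeal t → suppB (T v) ⊆ pIdeal j) ∧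
  (∀ v : ∀ i, Fin (k i) → F, suppB v ⊆ ({t} : Finset ι) → v ≠ 0 →
    j ∈ suppB (T v) ∧ Wblk w (T v) j = Wblk w v t) ∧
  (∀ u : ∀ i, Fin (k i) → F, suppB u ⊆ pIdeal j → suppB (S u) ⊆ pIdeal t)

lemma outA_neg (Q : Finset ι) (u : ∀ i, Fin (k i) → F) :
    outA Q (-u) = - outA Q u := by
  funext l
  by_cases h : l ∈ Q <;> simp [outA, h]

lemma core_step (w : F → ℕ) (hw0 : ∀ a : F, w a = 0 ↔ a = 0) (hk : ∀ i, 0 < k i)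
    (T S : (∀ i, Fin (k i) → F) →ₗ[F] (∀ i, Fin (k i) → F))
    (hTiso : ∀ u, omegaW w (T u) = omegaW w u)
    (hST : ∀ u, S (T u) = u)
    (hTS : ∀ u, T (S u) = u)
    (t : ι)
    (IHT : ∀ x : ι, (pIdeal x).card < (pIdeal t).card → ∃ j, GOODF T S w x j)
    (IHS : ∀ x : ι, (pIdeal x).card < (pIdeal t).card → ∃ j, GOODF S T w x j) :
    ∃ j : ι,
      (pIdeal j).card = (pIdeal t).card ∧
      (∀ v : ∀ i, Fin (k i) → F, suppB v ⊆ pIdeal t → suppB (T v) ⊆ pIdeal j) ∧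
      (∀ v : ∀ i, Fin (k i) → F, suppB v ⊆ ({t} : Finset ι) → v ≠ 0 →
        j ∈ suppB (T v) ∧ Wblk w (T v) j = Wblk w v t) ∧
      (∀ u : ∀ i, Fin (k i) → F, suppB u ⊆ (pIdeal j).erase j →
        suppB (S u) ⊆ (pIdeal t).erase t) := by
  classical
  set E := (pIdeal t).erase t with hE
  have htmem : t ∈ pIdeal t := mem_pIdeal.2 le_rfl
  have hEcard : E.card + 1 = (pIdeal t).card := Finset.card_erase_add_one htmem
  have hEmem : ∀ s ∈ E, s ≤ t ∧ s ≠ t := fun s hs =>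
    ⟨mem_pIdeal.1 (Finset.erase_subset _ _ hs), Finset.ne_of_mem_erase hs⟩
  have hEcardlt : ∀ s ∈ E, (pIdeal s).card < (pIdeal t).card := by
    intro s hs
    have hsub : pIdeal s ⊆ pIdeal t := fun x hx =>
      mem_pIdeal.2 (le_trans (mem_pIdeal.1 hx) (hEmem s hs).1)
    have hts : t ∉ pIdeal s := fun hc =>
      (hEmem s hs).2 (le_antisymm (hEmem s hs).1 (mem_pIdeal.1 hc))
    exact Finset.card_lt_card ((Finset.ssubset_iff_of_subset hsub).2 ⟨t, htmem, hts⟩)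
  have hsig : ∀ s ∈ E, ∃ j, GOODF T S w s j := fun s hs => IHT s (hEcardlt s hs)
  choose! σ hσ using hsig
  have hτex : ∀ s ∈ E, ∃ j', GOODF S T w (σ s) j' := by
    intro s hs
    apply IHS
    rw [(hσ s hs).1]
    exact hEcardlt s hs
  choose! τ hτ using hτex
  -- τ s ≤ s₂ whenever σ s = σ s₂
  have hτle : ∀ s1 ∈ E, ∀ s2 ∈ E, σ s1 = σ s2 → τ s1 ≤ s2 := by
    intro s1 h1 s2 h2 heq
    obtain ⟨-, -, hf3', -⟩ := hτ s1 h1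
    obtain ⟨-, -, -, hf4⟩ := hσ s2 h2
    have hu_supp : suppB (indV (σ s1)) ⊆ ({σ s1} : Finset ι) := suppB_indV (k := k) (F := F)
    obtain ⟨hjmem, -⟩ := hf3' (indV (σ s1)) hu_supp (indV_ne_zero (k := k) (F := F) (hk _))
    have hsub : suppB (S (indV (σ s1))) ⊆ pIdeal s2 := by
      apply hf4
      refine subset_trans hu_supp (Finset.singleton_subset_iff.2 ?_)
      rw [heq]
      exact mem_pIdeal.2 le_rfl
    exact mem_pIdeal.1 (hsub hjmem)
  have hτs : ∀ s ∈ E, τ s = s := by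
    intro s hs
    have hle : τ s ≤ s := hτle s hs s hs rfl
    have hcards : (pIdeal (τ s)).card = (pIdeal s).card :=
      (hτ s hs).1.trans (hσ s hs).1
    have hsub2 : pIdeal (τ s) ⊆ pIdeal s := fun x hx =>
      mem_pIdeal.2 (le_trans (mem_pIdeal.1 hx) hle)
    have heq := Finset.eq_of_subset_of_card_le hsub2 (le_of_eq hcards.symm)
    have hsle : s ≤ τ s := by
      have : s ∈ pIdeal (τ s) := by rw [heq]; exact mem_pIdeal.2 le_rfl
      exact mem_pIdeal.1 this
    exact le_antisymm hle hsle
  have hσinj : ∀ s1 ∈ E, ∀ s2 ∈ E, σ s1 = σ s2 → s1 = s2 := by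
    intro s1 h1 s2 h2 heq
    have h12 : s1 ≤ s2 := by
      have := hτle s1 h1 s2 h2 heq
      rwa [hτs s1 h1] at this
    have h21 : s2 ≤ s1 := by
      have := hτle s2 h2 s1 h1 heq.symm
      rwa [hτs s2 h2] at this
    exact le_antisymm h12 h21
  have hpsubE : ∀ s ∈ E, pIdeal s ⊆ E := by
    intro s hs x hx
    refine Finset.mem_erase.2 ⟨?_, mem_pIdeal.2 (le_trans (mem_pIdeal.1 hx) (hEmem s hs).1)⟩
    intro hxt
    apply (hEmem s hs).2
    apply le_antisymm (hEmem s hs).1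
    rw [← hxt]
    exact mem_pIdeal.1 hx
  have hσmono : ∀ s' s, s' ∈ E → s ∈ E → s' ≤ s → σ s' ≤ σ s := by
    intro s' s h' hsE hle
    obtain ⟨-, hf2, -, -⟩ := hσ s hsE
    obtain ⟨-, -, hf3', -⟩ := hσ s' h'
    have h1 : suppB (indV s') ⊆ pIdeal s :=
      subset_trans (suppB_indV (k := k) (F := F)) (Finset.singleton_subset_iff.2 (mem_pIdeal.2 hle))
    have h2 := hf2 _ h1
    obtain ⟨hjm, -⟩ := hf3' (indV s') (suppB_indV (k := k) (F := F)) (indV_ne_zero (k := k) (F := F) (hk s'))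
    exact mem_pIdeal.1 (h2 hjm)
  have hIMG : ∀ s ∈ E, pIdeal (σ s) = (pIdeal s).image σ := by
    intro s hs
    have hsubimg : (pIdeal s).image σ ⊆ pIdeal (σ s) := by
      intro y hy
      obtain ⟨x, hx, rfl⟩ := Finset.mem_image.1 hy
      exact mem_pIdeal.2 (hσmono x s (hpsubE s hs hx) hs (mem_pIdeal.1 hx))
    have hcard : (pIdeal (σ s)).card ≤ ((pIdeal s).image σ).card := by
      rw [Finset.card_image_of_injOn
        (fun x hx y hy hxy => hσinj x (hpsubE s hs hx) y (hpsubE s hs hy) hxy)]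
      exact le_of_eq (hσ s hs).1
    exact (Finset.eq_of_subset_of_card_le hsubimg hcard).symm
  set A := E.biUnion (fun s => pIdeal (σ s)) with hA
  have hAimg : A = E.image σ := by
    apply Finset.Subset.antisymm
    · intro x hx
      obtain ⟨s, hs, hxs⟩ := Finset.mem_biUnion.1 hx
      rw [hIMG s hs] at hxs
      obtain ⟨x', hx', rfl⟩ := Finset.mem_image.1 hxs
      exact Finset.mem_image.2 ⟨x', hpsubE s hs hx', rfl⟩
    · intro x hx
      obtain ⟨s, hs, rfl⟩ := Finset.mem_image.1 hx
      exact Finset.mem_biUnion.2 ⟨s, hs, mem_pIdeal.2 le_rfl⟩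
  have hAcard : A.card = E.card := by
    rw [hAimg]
    exact Finset.card_image_of_injOn (fun x hx y hy hxy => hσinj x hx y hy hxy)
  have hAdown : ∀ x a, a ∈ A → x ≤ a → x ∈ A := by
    intro x a ha hle
    obtain ⟨s, hs, has⟩ := Finset.mem_biUnion.1 ha
    exact Finset.mem_biUnion.2 ⟨s, hs, mem_pIdeal.2 (le_trans hle (mem_pIdeal.1 has))⟩
  have htA : t ∉ A := by
    intro ht
    rw [hAimg] at ht
    obtain ⟨s, hs, hst⟩ := Finset.mem_image.1 ht
    have h1 : (pIdeal (σ s)).card = (pIdeal s).card := (hσ s hs).1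
    rw [hst] at h1
    have := hEcardlt s hs
    omega
  have hTE : ∀ x, suppB x ⊆ E → suppB (T x) ⊆ A := by
    intro x hx
    apply suppB_map_sum T hx
    intro s hs
    by_cases hzero : restrictTo {s} x = 0
    · rw [hzero, map_zero, suppB_zero (k := k)]
      exact Finset.empty_subset _
    · have h1 : suppB (restrictTo {s} x) ⊆ pIdeal s :=
        subset_trans suppB_restrictTo (Finset.singleton_subset_iff.2 (mem_pIdeal.2 le_rfl))
      have h2 := (hσ s hs).2.1 _ h1
      exact subset_trans h2 (fun y hy => Finset.mem_biUnion.2 ⟨s, hs, hy⟩)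
  have hSA : ∀ u, suppB u ⊆ A → suppB (S u) ⊆ E := by
    intro u hu
    apply suppB_map_sum S hu
    intro a ha
    obtain ⟨s, hs, has⟩ := Finset.mem_biUnion.1 ha
    by_cases hzero : restrictTo {a} u = 0
    · rw [hzero, map_zero, suppB_zero (k := k)]
      exact Finset.empty_subset _
    · have h1 : suppB (restrictTo {a} u) ⊆ pIdeal (σ s) :=
        subset_trans suppB_restrictTo (Finset.singleton_subset_iff.2 has)
      have h2 := (hσ s hs).2.2.2 _ h1
      exact subset_trans h2 (hpsubE s hs)
  have hper : ∀ v : ∀ i, Fin (k i) → F, suppB v ⊆ ({t} : Finset ι) → v ≠ 0 →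
      (suppB (outA A (T v))).Nonempty ∧
      (∑ e ∈ suppB (outA A (T v)), Wblk w (T v) e = Wblk w v t) ∧
      idealOf (outA A (T v)) = A ∪ suppB (outA A (T v)) ∧
      (∀ x ∈ idealOf (outA A (T v)), ∃ e ∈ suppB (outA A (T v)), x ≤ e) :=
    fun v hv hvne => per_v w hw0 hk T S hTiso hST hTS t A hAdown hAcard hSA v hv hvne
  -- every image has a single block outside A
  have hsingle : ∀ v : ∀ i, Fin (k i) → F, suppB v ⊆ ({t} : Finset ι) → v ≠ 0 →
      (suppB (outA A (T v))).card = 1 := by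
    intro v hv hvne
    obtain ⟨hne, hkey, -, -⟩ := hper v hv hvne
    by_contra hcard
    have h2 : 1 < (suppB (outA A (T v))).card := by
      have := Finset.card_pos.2 hne
      omega
    obtain ⟨e1, he1, e2, he2, hne12⟩ := Finset.one_lt_card.1 h2
    have hz1 : outA A (T v) e1 ≠ 0 := mem_suppB.1 he1
    obtain ⟨p, hp⟩ := exists_entry_ne_zero hz1
    obtain ⟨cstar, hcstar⟩ := exists_Mw (w := w)
    have hMwpos : 0 < Mw w := Mw_pos hw0
    have hmwpos : 0 < mw w := mw_pos hw0
    have hcne : cstar ≠ 0 := by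
      intro h
      rw [h, (hw0 0).2 rfl] at hcstar
      omega
    set α := cstar * (outA A (T v) e1 p)⁻¹ with hα
    have hαne : α ≠ 0 := mul_ne_zero hcne (inv_ne_zero hp)
    have hv' : suppB (α • v) ⊆ ({t} : Finset ι) := by
      rw [suppB_smul hαne]
      exact hv
    have hvne' : α • v ≠ 0 := by
      intro h
      apply hvne
      funext l q
      have h1 := congrFun (congrFun h l) q
      have h2 : α * v l q = 0 := h1
      rcases mul_eq_zero.1 h2 with h3 | h3
      · exact absurd h3 hαne
      · exact h3
    obtain ⟨-, hkey', -, -⟩ := hper (α • v) hv' hvne'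
    have houtsmul : outA A (T (α • v)) = α • outA A (T v) := by
      rw [map_smul, outA_smul]
    have hsupp' : suppB (outA A (T (α • v))) = suppB (outA A (T v)) := by
      rw [houtsmul, suppB_smul hαne]
    rw [hsupp'] at hkey'
    have hsum_ge : Wblk w (T (α • v)) e1 + Wblk w (T (α • v)) e2
        ≤ ∑ e ∈ suppB (outA A (T v)), Wblk w (T (α • v)) e := by
      rw [← Finset.sum_pair hne12]
      apply Finset.sum_le_sum_of_subset
      intro y hy
      rcases Finset.mem_insert.1 hy with h | h
      · rw [h]; exact he1
      · rw [Finset.mem_singleton.1 h]; exact he2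
    have he1A : e1 ∉ A := suppB_outA_disj he1
    have he2A : e2 ∉ A := suppB_outA_disj he2
    have hW1 : Mw w ≤ Wblk w (T (α • v)) e1 := by
      have hTv1 : T v e1 p = outA A (T v) e1 p := by
        rw [outA_not_mem he1A]
      have hblock : T (α • v) e1 p = cstar := by
        rw [map_smul]
        show α * T v e1 p = cstar
        rw [hTv1, hα]
        field_simp
      have h5 : w (T (α • v) e1 p) ≤ Wblk w (T (α • v)) e1 :=
        Finset.le_sup (f := fun q => w (T (α • v) e1 q)) (Finset.mem_univ p)
      rw [hblock, hcstar] at h5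
      exact h5
    have hW2 : mw w ≤ Wblk w (T (α • v)) e2 := by
      apply mw_le_Wblk
      have h6 : T (α • v) e2 = outA A (T (α • v)) e2 := (outA_not_mem he2A).symm
      rw [h6, houtsmul]
      intro h
      apply mem_suppB.1 he2
      funext q
      have h7 := congrFun h q
      have h8 : α * outA A (T v) e2 q = 0 := h7
      rcases mul_eq_zero.1 h8 with h9 | h9
      · exact absurd h9 hαne
      · exact h9
    have hub : Wblk w (α • v) t ≤ Mw w := Wblk_le_Mw
    omega
  -- uniformity of the top block
  have hv0supp : suppB (indV t : ∀ i, Fin (k i) → F) ⊆ ({t} : Finset ι) :=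
    suppB_indV (k := k) (F := F)
  have hv0ne : (indV t : ∀ i, Fin (k i) → F) ≠ 0 := indV_ne_zero (k := k) (F := F) (hk t)
  obtain ⟨j, hj⟩ := Finset.card_eq_one.1 (hsingle (indV t) hv0supp hv0ne)
  have hDuni : ∀ v : ∀ i, Fin (k i) → F, suppB v ⊆ ({t} : Finset ι) → v ≠ 0 →
      suppB (outA A (T v)) = {j} := by
    intro v hv hvne
    obtain ⟨j', hj'⟩ := Finset.card_eq_one.1 (hsingle v hv hvne)
    by_cases hjj : j' = j
    · rw [hj', hjj]
    · exfalso
      have hzv : outA A (T v) j' ≠ 0 := by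
        apply mem_suppB.1
        rw [hj']
        exact Finset.mem_singleton_self j'
      have hz0 : outA A (T (indV t)) j ≠ 0 := by
        apply mem_suppB.1
        rw [hj]
        exact Finset.mem_singleton_self j
      have hz0j' : outA A (T (indV t)) j' = 0 := by
        by_contra h
        have h1 : j' ∈ suppB (outA A (T (indV t))) := mem_suppB.2 h
        rw [hj] at h1
        exact hjj (Finset.mem_singleton.1 h1)
      have hzvj : outA A (T v) j = 0 := by
        by_contra h
        have h1 : j ∈ suppB (outA A (T v)) := mem_suppB.2 h
        rw [hj'] at h1
        exact hjj (Finset.mem_singleton.1 h1).symm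
      have hsum_ne : v + indV t ≠ 0 := by
        intro h
        have hvv : indV t = -v := eq_neg_of_add_eq_zero_right h
        have h2 : outA A (T (indV t)) = - outA A (T v) := by
          rw [hvv, map_neg, outA_neg]
        have h3 := congrFun h2 j'
        rw [hz0j'] at h3
        apply hzv
        have h4 : -(outA A (T v) j') = 0 := h3.symm
        exact neg_eq_zero.1 h4
      have hsupp_sum : suppB (v + indV t) ⊆ ({t} : Finset ι) :=
        subset_trans suppB_add_subset (Finset.union_subset hv hv0supp)
      obtain ⟨j'', hj''⟩ := Finset.card_eq_one.1 (hsingle (v + indV t) hsupp_sum hsum_ne)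
      have houtadd : outA A (T (v + indV t)) = outA A (T v) + outA A (T (indV t)) := by
        rw [map_add, outA_add]
      have hmem1 : j' ∈ suppB (outA A (T (v + indV t))) := by
        apply mem_suppB.2
        rw [houtadd]
        show outA A (T v) j' + outA A (T (indV t)) j' ≠ 0
        rw [hz0j', add_zero]
        exact hzv
      have hmem2 : j ∈ suppB (outA A (T (v + indV t))) := by
        apply mem_suppB.2
        rw [houtadd]
        show outA A (T v) j + outA A (T (indV t)) j ≠ 0
        rw [hzvj, zero_add]
        exact hz0
      rw [hj''] at hmem1 hmem2
      exact hjj ((Finset.mem_singleton.1 hmem1).trans (Finset.mem_singleton.1 hmem2).symm)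
  obtain ⟨hne0, hkey0, hideal0, hmax0⟩ := hper (indV t) hv0supp hv0ne
  have hjA : j ∉ A := by
    apply suppB_outA_disj (u := T (indV t))
    rw [hj]
    exact Finset.mem_singleton_self j
  have hpj : pIdeal j = A ∪ {j} := by
    apply Finset.Subset.antisymm
    · intro x hx
      have hxi : x ∈ idealOf (outA A (T (indV t))) :=
        mem_idealOf.2 ⟨j, by rw [hj]; exact Finset.mem_singleton_self j, mem_pIdeal.1 hx⟩
      rw [hideal0, hj] at hxi
      exact hxi
    · apply Finset.union_subset
      · intro a ha
        have hai : a ∈ idealOf (outA A (T (indV t))) := by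
          rw [hideal0]
          exact Finset.mem_union_left _ ha
        obtain ⟨e, he, hle⟩ := hmax0 a hai
        rw [hj] at he
        rw [← Finset.mem_singleton.1 he]
        exact mem_pIdeal.2 hle
      · intro x hx
        rw [Finset.mem_singleton.1 hx]
        exact mem_pIdeal.2 le_rfl
  have hinsert : A ∪ {j} = insert j A := by
    ext x
    simp [or_comm]
  have hcardj : (pIdeal j).card = (pIdeal t).card := by
    rw [hpj, hinsert, Finset.card_insert_of_notMem hjA, hAcard]
    exact hEcard
  have hApj : A ⊆ pIdeal j := by
    rw [hpj]
    exact Finset.subset_union_left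
  have hfwd1 : ∀ v : ∀ i, Fin (k i) → F, suppB v ⊆ ({t} : Finset ι) → v ≠ 0 →
      suppB (T v) ⊆ pIdeal j := by
    intro v hv hvne l hl
    by_cases hlA : l ∈ A
    · exact hApj hlA
    · have h1 : outA A (T v) l = T v l := outA_not_mem hlA
      have h2 : l ∈ suppB (outA A (T v)) := by
        apply mem_suppB.2
        rw [h1]
        exact mem_suppB.1 hl
      rw [hDuni v hv hvne] at h2
      rw [Finset.mem_singleton.1 h2, hpj]
      exact Finset.mem_union_right _ (Finset.mem_singleton_self j)
  refine ⟨j, hcardj, ?_, ?_, ?_⟩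
  · intro x hx
    apply suppB_map_sum T hx
    intro s hs
    by_cases hzero : restrictTo {s} x = 0
    · rw [hzero, map_zero, suppB_zero (k := k)]
      exact Finset.empty_subset _
    · by_cases hst : s = t
      · apply hfwd1 _ _ hzero
        rw [hst]
        exact suppB_restrictTo
      · have hsE : s ∈ E := Finset.mem_erase.2 ⟨hst, hs⟩
        have h1 : suppB (restrictTo {s} x) ⊆ pIdeal s :=
          subset_trans suppB_restrictTo (Finset.singleton_subset_iff.2 (mem_pIdeal.2 le_rfl))
        have h2 := (hσ s hsE).2.1 _ h1
        refine subset_trans h2 (subset_trans ?_ hApj)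
        intro y hy
        exact Finset.mem_biUnion.2 ⟨s, hsE, hy⟩
  · intro v hv hvne
    constructor
    · apply mem_suppB.2
      have h1 : outA A (T v) j = T v j := outA_not_mem hjA
      rw [← h1]
      apply mem_suppB.1
      rw [hDuni v hv hvne]
      exact Finset.mem_singleton_self j
    · obtain ⟨-, hkey, -, -⟩ := hper v hv hvne
      rw [hDuni v hv hvne, Finset.sum_singleton] at hkey
      exact hkey
  · intro u hu
    have hEj : (pIdeal j).erase j = A := by
      rw [hpj, hinsert]
      rw [Finset.erase_insert hjA]
    rw [hEj] at hu
    exact hSA u hu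

end Core

section Assemble
variable [Fintype ι] [PartialOrder ι] [Field F] [Fintype F] {k : ι → ℕ}

lemma assemble (w : F → ℕ) (hk : ∀ i, 0 < k i)
    (T S : (∀ i, Fin (k i) → F) →ₗ[F] (∀ i, Fin (k i) → F))
    (hST : ∀ u, S (T u) = u)
    {t j j' : ι}
    (C1 : (pIdeal j).card = (pIdeal t).card)
    (C2 : ∀ v : ∀ i, Fin (k i) → F, suppB v ⊆ pIdeal t → suppB (T v) ⊆ pIdeal j)
    (C3 : ∀ v : ∀ i, Fin (k i) → F, suppB v ⊆ ({t} : Finset ι) → v ≠ 0 →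
      j ∈ suppB (T v) ∧ Wblk w (T v) j = Wblk w v t)
    (C4 : ∀ u : ∀ i, Fin (k i) → F, suppB u ⊆ (pIdeal j).erase j →
      suppB (S u) ⊆ (pIdeal t).erase t)
    (D1 : (pIdeal j').card = (pIdeal j).card)
    (D2 : ∀ v : ∀ i, Fin (k i) → F, suppB v ⊆ pIdeal j → suppB (S v) ⊆ pIdeal j')
    (D3 : ∀ v : ∀ i, Fin (k i) → F, suppB v ⊆ ({j} : Finset ι) → v ≠ 0 →
      j' ∈ suppB (S v) ∧ Wblk w (S v) j' = Wblk w v j) :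
    GOODF T S w t j := by
  classical
  set v0 : ∀ i, Fin (k i) → F := indV t with hv0
  have hv0supp : suppB v0 ⊆ ({t} : Finset ι) := suppB_indV (k := k) (F := F)
  have hv0ne : v0 ≠ 0 := indV_ne_zero (k := k) (F := F) (hk t)
  set z := T v0 with hz
  obtain ⟨hjmem, -⟩ := C3 v0 hv0supp hv0ne
  have hzsupp : suppB z ⊆ pIdeal j :=
    C2 v0 (subset_trans hv0supp (Finset.singleton_subset_iff.2 (mem_pIdeal.2 le_rfl)))
  set zj := restrictTo {j} z with hzj
  have hzjj : zj j = z j := restrictTo_mem (Finset.mem_singleton_self j)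
  have hzrest : suppB (z - zj) ⊆ (pIdeal j).erase j := by
    intro l hl
    have hne : (z - zj) l ≠ 0 := mem_suppB.1 hl
    by_cases hlj : l = j
    · exfalso
      apply hne
      rw [hlj]
      show z j - zj j = 0
      rw [hzjj, sub_self]
    · have hzjl : zj l = 0 := restrictTo_not_mem (by simp [hlj])
      have hzl : z l ≠ 0 := by
        intro h
        apply hne
        show z l - zj l = 0
        rw [h, hzjl, sub_self]
      exact Finset.mem_erase.2 ⟨hlj, hzsupp (mem_suppB.2 hzl)⟩
  have hSrest := C4 (z - zj) hzrest
  have hSzj : S zj = v0 - S (z - zj) := by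
    have h1 : S z = v0 := by rw [hz, hST]
    have h2 : S zj = S z - S (z - zj) := by
      rw [← map_sub]
      congr 1
      abel
    rw [h2, h1]
  have hSzjsupp : suppB (S zj) ⊆ pIdeal t := by
    rw [hSzj]
    intro l hl
    rcases Finset.mem_union.1 (suppB_sub_subset hl) with h | h
    · rw [Finset.mem_singleton.1 (hv0supp h)]
      exact mem_pIdeal.2 le_rfl
    · exact Finset.erase_subset _ _ (hSrest h)
  have hzjne : zj ≠ 0 := by
    intro h
    apply mem_suppB.1 hjmem
    have : zj j = 0 := by rw [h]; rfl
    rwa [hzjj] at this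
  obtain ⟨hj'mem, -⟩ := D3 zj suppB_restrictTo hzjne
  have hj't : j' ≤ t := mem_pIdeal.1 (hSzjsupp hj'mem)
  have hcards : (pIdeal j').card = (pIdeal t).card := D1.trans C1
  have hsub : pIdeal j' ⊆ pIdeal t := fun x hx =>
    mem_pIdeal.2 (le_trans (mem_pIdeal.1 hx) hj't)
  have heq : pIdeal j' = pIdeal t :=
    Finset.eq_of_subset_of_card_le hsub (le_of_eq hcards.symm)
  exact ⟨C1, C2, C3, fun u hu => heq ▸ D2 u hu⟩

lemma main_all (w : F → ℕ) (hw0 : ∀ a : F, w a = 0 ↔ a = 0) (hk : ∀ i, 0 < k i)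
    (T S : (∀ i, Fin (k i) → F) →ₗ[F] (∀ i, Fin (k i) → F))
    (hTiso : ∀ u, omegaW w (T u) = omegaW w u)
    (hSiso : ∀ u, omegaW w (S u) = omegaW w u)
    (hST : ∀ u, S (T u) = u)
    (hTS : ∀ u, T (S u) = u) :
    ∀ n : ℕ, ∀ t : ι, (pIdeal t).card ≤ n →
      (∃ j, GOODF T S w t j) ∧ (∃ j, GOODF S T w t j) := by
  intro n
  induction n with
  | zero =>
    intro t ht
    have : 0 < (pIdeal t).card := Finset.card_pos.2 ⟨t, mem_pIdeal.2 le_rfl⟩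
    omega
  | succ n ih =>
    intro t ht
    by_cases hle : (pIdeal t).card ≤ n
    · exact ih t hle
    · have IHT : ∀ x : ι, (pIdeal x).card < (pIdeal t).card → ∃ j, GOODF T S w x j :=
        fun x hx => (ih x (by omega)).1
      have IHS : ∀ x : ι, (pIdeal x).card < (pIdeal t).card → ∃ j, GOODF S T w x j :=
        fun x hx => (ih x (by omega)).2
      constructor
      · obtain ⟨j, hj1, hj2, hj3, hj4⟩ :=
          core_step w hw0 hk T S hTiso hST hTS t IHT IHS
        have IHT' : ∀ x : ι, (pIdeal x).card < (pIdeal j).card → ∃ j0, GOODF S T w x j0 :=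
          fun x hx => IHS x (by rw [hj1] at hx; exact hx)
        have IHS' : ∀ x : ι, (pIdeal x).card < (pIdeal j).card → ∃ j0, GOODF T S w x j0 :=
          fun x hx => IHT x (by rw [hj1] at hx; exact hx)
        obtain ⟨j', hja, hjb, hjc, hjd⟩ :=
          core_step w hw0 hk S T hSiso hTS hST j IHT' IHS'
        exact ⟨j, assemble w hk T S hST hj1 hj2 hj3 hj4 hja hjb hjc⟩
      · obtain ⟨j, hj1, hj2, hj3, hj4⟩ :=
          core_step w hw0 hk S T hSiso hTS hST t IHS IHT
        have IHT' : ∀ x : ι, (pIdeal x).card < (pIdeal j).card → ∃ j0, GOODF T S w x j0 :=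
          fun x hx => IHT x (by rw [hj1] at hx; exact hx)
        have IHS' : ∀ x : ι, (pIdeal x).card < (pIdeal j).card → ∃ j0, GOODF S T w x j0 :=
          fun x hx => IHS x (by rw [hj1] at hx; exact hx)
        obtain ⟨j', hja, hjb, hjc, hjd⟩ :=
          core_step w hw0 hk T S hTiso hST hTS j IHT' IHS'
        exact ⟨j, assemble w hk S T hTS hj1 hj2 hj3 hj4 hja hjb hjc⟩

end Assemble




/-- For a linear isometry `T` and each `i`, there is a unique `j` with
`T(V_i) ⊆ V_{⟨j⟩}` and `|⟨i⟩| = |⟨j⟩|`; moreover every nonzero `v_i ∈ V_i`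
decomposes as `T v_i = u_j + γ_j` with `u_j ∈ V_j` nonzero, `γ_j ∈ V_{⟨j⟩*}`
and `W_i(v_i) = W_j(u_j)`. -/
theorem stmt8 [Fintype ι] [PartialOrder ι] [Field F] [Fintype F] {k : ι → ℕ}
    (hk : ∀ i, 0 < k i)
    (w : F → ℕ)
    (hw0 : ∀ a : F, w a = 0 ↔ a = 0)
    (hwneg : ∀ a : F, w (-a) = w a)
    (hwadd : ∀ a b : F, w (a + b) ≤ w a + w b)
    (T : (∀ i, Fin (k i) → F) →ₗ[F] (∀ i, Fin (k i) → F))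
    (hT : ∀ u : ∀ i, Fin (k i) → F, omegaW w (T u) = omegaW w u) :
    ∀ i : ι, ∃! j : ι,
      (pIdeal i).card = (pIdeal j).card ∧
      (∀ v : ∀ i, Fin (k i) → F, suppB v ⊆ {i} → suppB (T v) ⊆ pIdeal j) ∧
      (∀ v : ∀ i, Fin (k i) → F, suppB v ⊆ {i} → v ≠ 0 →
        ∃ u γ : ∀ i, Fin (k i) → F, T v = u + γ ∧ suppB u ⊆ {j} ∧ u ≠ 0 ∧
          (∀ l ∈ suppB γ, l < j) ∧ Wblk w v i = Wblk w u j) := by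
  classical
  intro i
  have hinj : Function.Injective T := by
    intro x y hxy
    have h0 : T (x - y) = 0 := by rw [map_sub, hxy, sub_self]
    have h1 : omegaW w (x - y) = 0 := by rw [← hT (x - y), h0, omega_zero]
    have hxy0 : x - y = 0 := by
      by_contra h
      have := omega_pos hw0 h
      omega
    exact sub_eq_zero.1 hxy0
  have hbij : Function.Bijective T := Finite.injective_iff_bijective.1 hinj
  set Teq := LinearEquiv.ofBijective T hbij with hTeq
  set S : (∀ i, Fin (k i) → F) →ₗ[F] (∀ i, Fin (k i) → F) := Teq.symm.toLinearMap with hS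
  have hST : ∀ u, S (T u) = u := by
    intro u
    have h1 : T u = Teq u := rfl
    show Teq.symm (T u) = u
    rw [h1]
    exact Teq.symm_apply_apply u
  have hTS : ∀ u, T (S u) = u := by
    intro u
    show T (Teq.symm u) = u
    have h1 : T (Teq.symm u) = Teq (Teq.symm u) := rfl
    rw [h1]
    exact Teq.apply_symm_apply u
  have hSiso : ∀ u, omegaW w (S u) = omegaW w u := by
    intro u
    have h := hT (S u)
    rw [hTS] at h
    exact h.symm
  obtain ⟨j, hj1, hj2, hj3, hj4⟩ :=
    (main_all w hw0 hk T S hT hSiso hST hTS (pIdeal i).card i le_rfl).1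
  have hsing : ({i} : Finset ι) ⊆ pIdeal i :=
    Finset.singleton_subset_iff.2 (mem_pIdeal.2 le_rfl)
  refine ⟨j, ⟨hj1.symm, ?_, ?_⟩, ?_⟩
  · intro v hv
    exact hj2 v (subset_trans hv hsing)
  · intro v hv hvne
    obtain ⟨hjmem, hW⟩ := hj3 v hv hvne
    refine ⟨restrictTo {j} (T v), T v - restrictTo {j} (T v), by abel,
      suppB_restrictTo, ?_, ?_, ?_⟩
    · intro h
      apply mem_suppB.1 hjmem
      have h1 : restrictTo {j} (T v) j = 0 := by rw [h]; rfl
      rwa [restrictTo_mem (Finset.mem_singleton_self j)] at h1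
    · intro l hl
      have hne : (T v - restrictTo {j} (T v)) l ≠ 0 := mem_suppB.1 hl
      by_cases hlj : l = j
      · exfalso
        apply hne
        rw [hlj]
        show T v j - restrictTo {j} (T v) j = 0
        rw [restrictTo_mem (Finset.mem_singleton_self j), sub_self]
      · have h2 : restrictTo {j} (T v) l = 0 := restrictTo_not_mem (by simp [hlj])
        have h3 : T v l ≠ 0 := by
          intro h
          apply hne
          show T v l - restrictTo {j} (T v) l = 0
          rw [h, h2, sub_self]
        have h4 : l ∈ pIdeal j := hj2 v (subset_trans hv hsing) (mem_suppB.2 h3)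
        exact lt_of_le_of_ne (mem_pIdeal.1 h4) hlj
    · exact hW.symm.trans
        (Wblk_congr ((restrictTo_mem (Finset.mem_singleton_self j)).symm))
  · intro y hy
    obtain ⟨hc, hs2, hs3⟩ := hy
    have hvsupp : suppB (indV i : ∀ a, Fin (k a) → F) ⊆ ({i} : Finset ι) :=
      suppB_indV (k := k) (F := F)
    have hvne : (indV i : ∀ a, Fin (k a) → F) ≠ 0 := indV_ne_zero (k := k) (F := F) (hk i)
    obtain ⟨u, γ, hdec, hsuppu, hune, hγ, hWW⟩ := hs3 (indV i) hvsupp hvne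
    have hymem : y ∈ suppB (T (indV i)) := by
      apply mem_suppB.2
      rw [hdec]
      show u y + γ y ≠ 0
      have hγy : γ y = 0 := by
        by_contra h
        exact lt_irrefl y (hγ y (mem_suppB.2 h))
      have huy : u y ≠ 0 := (suppB_nonzero_mem hsuppu hune).1
      rw [hγy, add_zero]
      exact huy
    have h1 : y ≤ j := mem_pIdeal.1 (hj2 (indV i) (subset_trans hvsupp hsing) hymem)
    obtain ⟨hjmem2, -⟩ := hj3 (indV i) hvsupp hvne
    have h2 : j ≤ y := mem_pIdeal.1 (hs2 (indV i) hvsupp hjmem2)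
    exact le_antisymm h1 h2
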